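/- Suppose M and Y are random variables taking values in finite sets 𝓜 and 𝓨, and R is a {0,1}-valued random variable with R independent of Y given M. If P(R=1 | M=m) > 0 for all m, and the J×K matrix Θ with entries Θ_{m,y} = P(M=m, Y=y, R=1) has rank J = |𝓜|, then the function ζ: 𝓜 → ℝ defined by ζ(m) = P(R=0|M=m)/P(R=1|M=m) is the unique solution of the linear system P(Y=y, R=0) = Σ_{m∈𝓜} P(M=m, Y=y, R=1) ζ(m) for all y ∈ 𝓨, and consequently the joint distribution P(M=m, Y=y) is uniquely determined by the distribution of the observed data (Y, R, M·R). -/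

import Mathlib

open Finset
open scoped Classical

/-- The probability of the event `A` under the probability mass function `p`
on the finite sample space `Ω`. -/
noncomputable def pr {Ω : Type*} [Fintype Ω] (p : Ω → ℝ) (A : Ω → Prop) : ℝ :=
  ∑ ω, if A ω then p ω else 0

lemma pr_nonneg {Ω : Type*} [Fintype Ω] {p : Ω → ℝ} (hp0 : ∀ ω, 0 ≤ p ω)
    (A : Ω → Prop) : 0 ≤ pr p A := by
  apply Finset.sum_nonneg; intro ω _; by_cases h : A ω <;> simp [h, hp0 ω]

lemma pr_split {Ω : Type*} [Fintype Ω] (p : Ω → ℝ) (A : Ω → Prop) (R : Ω → Bool) :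
    pr p A = pr p (fun ω => A ω ∧ R ω = true) + pr p (fun ω => A ω ∧ R ω = false) := by
  unfold pr; rw [← Finset.sum_add_distrib]
  apply Finset.sum_congr rfl; intro ω _
  by_cases h : A ω <;> cases hR : R ω <;> simp [h, hR]

lemma pr_sum_m {Ω 𝓜 : Type*} [Fintype Ω] [Fintype 𝓜] (p : Ω → ℝ)
    (M : Ω → 𝓜) (C : Ω → Prop) :
    pr p C = ∑ m, pr p (fun ω => M ω = m ∧ C ω) := by
  unfold pr; rw [Finset.sum_comm]
  apply Finset.sum_congr rfl; intro ω _
  by_cases h : C ω <;> simp [h]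

lemma key_identity {Ω 𝓜 𝓨 : Type*} [Fintype Ω] [Fintype 𝓜] [Fintype 𝓨]
    (p : Ω → ℝ) (hp0 : ∀ ω, 0 ≤ p ω)
    (M : Ω → 𝓜) (Y : Ω → 𝓨) (R : Ω → Bool)
    (hCI : ∀ m y r,
      pr p (fun ω => M ω = m) * pr p (fun ω => M ω = m ∧ Y ω = y ∧ R ω = r) =
        pr p (fun ω => M ω = m ∧ Y ω = y) * pr p (fun ω => M ω = m ∧ R ω = r))
    (hpos : ∀ m, 0 < pr p (fun ω => M ω = m ∧ R ω = true)) (m : 𝓜) (y : 𝓨) :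
    pr p (fun ω => M ω = m ∧ Y ω = y ∧ R ω = false) =
      pr p (fun ω => M ω = m ∧ Y ω = y ∧ R ω = true) *
        (pr p (fun ω => M ω = m ∧ R ω = false) /
          pr p (fun ω => M ω = m ∧ R ω = true)) := by
  set At := pr p (fun ω => M ω = m ∧ Y ω = y ∧ R ω = true) with hAt
  set Af := pr p (fun ω => M ω = m ∧ Y ω = y ∧ R ω = false) with hAf
  set Bt := pr p (fun ω => M ω = m ∧ R ω = true) with hBt
  set Bf := pr p (fun ω => M ω = m ∧ R ω = false) with hBf
  have hM : pr p (fun ω => M ω = m) = Bt + Bf := pr_split p _ R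
  have h1 := hCI m y true
  have h2 := hCI m y false
  rw [hM] at h1 h2
  have hBtpos := hpos m
  have hBfnn : 0 ≤ Bf := pr_nonneg hp0 _
  have hcross : At * Bf = Af * Bt := by
    have h0 : (Bt + Bf) * (At * Bf - Af * Bt) = 0 := by nlinarith [h1, h2]
    rcases mul_eq_zero.mp h0 with h | h
    · linarith
    · linarith
  field_simp
  have hBt0 : Bt ≠ 0 := ne_of_gt hBtpos
  field_simp
  linarith [hcross]

/-- Theorem 1 (discrete case).  Suppose `M`, `Y` take values in finite sets and
`R` is a missingness indicator for `M` with `R ⊥ Y | M`.  If `P(R=1 | M=m) > 0`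
for all `m` and the matrix `Θ` with entries `Θ_{m,y} = P(M=m, Y=y, R=1)` has full
row rank, then `ζ(m) = P(R=0|M=m)/P(R=1|M=m)` is the unique solution of the
linear system `P(Y=y, R=0) = ∑_m P(M=m, Y=y, R=1) ζ(m)`, and consequently the
joint distribution `P(M=m, Y=y)` is uniquely determined by the observed-data
distribution. -/
theorem mediator_mnar_identification
    {Ω Ω' 𝓜 𝓨 : Type*} [Fintype Ω] [Fintype Ω'] [Fintype 𝓜] [Fintype 𝓨]
    (p : Ω → ℝ) (hp0 : ∀ ω, 0 ≤ p ω) (hp1 : ∑ ω, p ω = 1)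
    (M : Ω → 𝓜) (Y : Ω → 𝓨) (R : Ω → Bool)
    -- conditional independence  R ⊥ Y | M
    (hCI : ∀ m y r,
      pr p (fun ω => M ω = m) * pr p (fun ω => M ω = m ∧ Y ω = y ∧ R ω = r) =
        pr p (fun ω => M ω = m ∧ Y ω = y) * pr p (fun ω => M ω = m ∧ R ω = r))
    -- positivity:  P(R=1, M=m) > 0 for every m
    (hpos : ∀ m, 0 < pr p (fun ω => M ω = m ∧ R ω = true))
    -- the J × K matrix Θ has full row rank J
    (hrank : ∀ v : 𝓜 → ℝ,
      (∀ y, ∑ m, pr p (fun ω => M ω = m ∧ Y ω = y ∧ R ω = true) * v m = 0) → v = 0)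
    -- a second model satisfying the same assumptions
    (q : Ω' → ℝ) (hq0 : ∀ ω, 0 ≤ q ω) (hq1 : ∑ ω, q ω = 1)
    (M' : Ω' → 𝓜) (Y' : Ω' → 𝓨) (R' : Ω' → Bool)
    (hCI' : ∀ m y r,
      pr q (fun ω => M' ω = m) * pr q (fun ω => M' ω = m ∧ Y' ω = y ∧ R' ω = r) =
        pr q (fun ω => M' ω = m ∧ Y' ω = y) * pr q (fun ω => M' ω = m ∧ R' ω = r))
    (hpos' : ∀ m, 0 < pr q (fun ω => M' ω = m ∧ R' ω = true))
    -- with the same observed-data distribution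
    (hobs1 : ∀ m y, pr p (fun ω => M ω = m ∧ Y ω = y ∧ R ω = true) =
        pr q (fun ω => M' ω = m ∧ Y' ω = y ∧ R' ω = true))
    (hobs0 : ∀ y, pr p (fun ω => Y ω = y ∧ R ω = false) =
        pr q (fun ω => Y' ω = y ∧ R' ω = false)) :
    -- ζ solves the linear system
    ((∀ y, pr p (fun ω => Y ω = y ∧ R ω = false) =
        ∑ m, pr p (fun ω => M ω = m ∧ Y ω = y ∧ R ω = true) *
          (pr p (fun ω => M ω = m ∧ R ω = false) /
            pr p (fun ω => M ω = m ∧ R ω = true))) ∧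
      -- and is its unique solution
      (∀ ζ' : 𝓜 → ℝ,
        (∀ y, pr p (fun ω => Y ω = y ∧ R ω = false) =
          ∑ m, pr p (fun ω => M ω = m ∧ Y ω = y ∧ R ω = true) * ζ' m) →
        ζ' = fun m =>
          pr p (fun ω => M ω = m ∧ R ω = false) /
            pr p (fun ω => M ω = m ∧ R ω = true))) ∧
    -- consequently the joint distribution of (M, Y) is identified
    (∀ m y, pr p (fun ω => M ω = m ∧ Y ω = y) =
        pr q (fun ω => M' ω = m ∧ Y' ω = y)) := by
  set ζ : 𝓜 → ℝ := fun m =>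
    pr p (fun ω => M ω = m ∧ R ω = false) / pr p (fun ω => M ω = m ∧ R ω = true)
    with hζ
  set ζq : 𝓜 → ℝ := fun m =>
    pr q (fun ω => M' ω = m ∧ R' ω = false) / pr q (fun ω => M' ω = m ∧ R' ω = true)
    with hζq
  have hsolve : ∀ y, pr p (fun ω => Y ω = y ∧ R ω = false) =
      ∑ m, pr p (fun ω => M ω = m ∧ Y ω = y ∧ R ω = true) * ζ m := by
    intro y
    rw [pr_sum_m p M (fun ω => Y ω = y ∧ R ω = false)]
    exact Finset.sum_congr rfl fun m _ =>
      key_identity p hp0 M Y R hCI hpos m y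
  have hsolve' : ∀ y, pr q (fun ω => Y' ω = y ∧ R' ω = false) =
      ∑ m, pr q (fun ω => M' ω = m ∧ Y' ω = y ∧ R' ω = true) * ζq m := by
    intro y
    rw [pr_sum_m q M' (fun ω => Y' ω = y ∧ R' ω = false)]
    exact Finset.sum_congr rfl fun m _ =>
      key_identity q hq0 M' Y' R' hCI' hpos' m y
  have huniq : ∀ ζ' : 𝓜 → ℝ,
      (∀ y, pr p (fun ω => Y ω = y ∧ R ω = false) =
        ∑ m, pr p (fun ω => M ω = m ∧ Y ω = y ∧ R ω = true) * ζ' m) →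
      ζ' = ζ := by
    intro ζ' hζ'
    have hv : (fun m => ζ' m - ζ m) = 0 := by
      apply hrank
      intro y
      have := (hζ' y).symm.trans (hsolve y)
      simp only [mul_sub, Finset.sum_sub_distrib]
      linarith [this]
    funext m
    have := congrFun hv m
    simp at this
    linarith [this]
  refine ⟨⟨hsolve, huniq⟩, ?_⟩
  -- ζq also solves the p-system
  have hζq_solves : ∀ y, pr p (fun ω => Y ω = y ∧ R ω = false) =
      ∑ m, pr p (fun ω => M ω = m ∧ Y ω = y ∧ R ω = true) * ζq m := by
    intro y
    rw [hobs0 y, hsolve' y]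
    exact Finset.sum_congr rfl fun m _ => by rw [hobs1 m y]
  have hζeq : ζq = ζ := huniq ζq hζq_solves
  intro m y
  rw [pr_split p (fun ω => M ω = m ∧ Y ω = y) R,
    pr_split q (fun ω => M' ω = m ∧ Y' ω = y) R']
  have e1 : pr p (fun ω => (M ω = m ∧ Y ω = y) ∧ R ω = true) =
      pr p (fun ω => M ω = m ∧ Y ω = y ∧ R ω = true) := by
    unfold pr; apply Finset.sum_congr rfl; intro ω _; simp [and_assoc]
  have e2 : pr p (fun ω => (M ω = m ∧ Y ω = y) ∧ R ω = false) =
      pr p (fun ω => M ω = m ∧ Y ω = y ∧ R ω = false) := by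
    unfold pr; apply Finset.sum_congr rfl; intro ω _; simp [and_assoc]
  have e1' : pr q (fun ω => (M' ω = m ∧ Y' ω = y) ∧ R' ω = true) =
      pr q (fun ω => M' ω = m ∧ Y' ω = y ∧ R' ω = true) := by
    unfold pr; apply Finset.sum_congr rfl; intro ω _; simp [and_assoc]
  have e2' : pr q (fun ω => (M' ω = m ∧ Y' ω = y) ∧ R' ω = false) =
      pr q (fun ω => M' ω = m ∧ Y' ω = y ∧ R' ω = false) := by
    unfold pr; apply Finset.sum_congr rfl; intro ω _; simp [and_assoc]
  rw [e1, e2, e1', e2',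
    key_identity p hp0 M Y R hCI hpos m y,
    key_identity q hq0 M' Y' R' hCI' hpos' m y,
    hobs1 m y]
  have : ζq m = ζ m := congrFun hζeq m
  simp only [hζ, hζq] at this
  rw [this]
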